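/- Let k be a field of characteristic zero, R = k[t], B = R[X,Y,Z], D the R-derivation with DX = t, DY = tZ + X², DZ = -2X. Set G = tZ + X² and F = -GX + tY. Then DF = 0, DG = 0, and F² - G³ = t·H where H = tY² - 2tX²Z² - 2tXYZ - 2X³Y - X⁴Z - t²Z³; in particular DH = 0. -/
import Mathlib


open MvPolynomial

/-- `R = k[t]`. -/
abbrev Stmt10R (k : Type*) [Field k] := Polynomial k

/-- `B = R[X,Y,Z]` with `X = X 0`, `Y = X 1`, `Z = X 2`. -/
abbrev Stmt10B (k : Type*) [Field k] := MvPolynomial (Fin 3) (Stmt10R k)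

/-- With `R = k[t]`, `B = R[X,Y,Z]` and `D` the `R`-derivation with `DX = t`,
`DY = tZ + X²`, `DZ = -2X`:  setting `G = tZ + X²`, `F = -GX + tY` and
`H = tY² - 2tX²Z² - 2tXYZ - 2X³Y - X⁴Z - t²Z³`, one has `DF = 0`, `DG = 0`,
`F² - G³ = t·H`, and `DH = 0`. -/
theorem stmt10 {k : Type*} [Field k] [CharZero k]
    (D : Derivation (Stmt10R k) (Stmt10B k) (Stmt10B k))
    (hX : D (X 0) = (C Polynomial.X : Stmt10B k))
    (hY : D (X 1) = (C Polynomial.X : Stmt10B k) * X 2 + X 0 ^ 2)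
    (hZ : D (X 2) = -(2 * X 0))
    (F G H : Stmt10B k)
    (hG : G = (C Polynomial.X : Stmt10B k) * X 2 + X 0 ^ 2)
    (hF : F = -(G * X 0) + (C Polynomial.X : Stmt10B k) * X 1)
    (hH : H = (C Polynomial.X : Stmt10B k) * X 1 ^ 2
        - 2 * (C Polynomial.X : Stmt10B k) * X 0 ^ 2 * X 2 ^ 2
        - 2 * (C Polynomial.X : Stmt10B k) * X 0 * X 1 * X 2
        - 2 * X 0 ^ 3 * X 1 - X 0 ^ 4 * X 2
        - (C Polynomial.X : Stmt10B k) ^ 2 * X 2 ^ 3) :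
    D F = 0 ∧ D G = 0 ∧
      F ^ 2 - G ^ 3 = (C Polynomial.X : Stmt10B k) * H ∧ D H = 0 := by
  have hC : ∀ p : Polynomial k, D (C p) = 0 := fun p => D.map_algebraMap p
  have h2 : D (2 : Stmt10B k) = 0 := by
    rw [show (2 : Stmt10B k) = 1 + 1 by norm_num, map_add, Derivation.map_one_eq_zero, add_zero]
  subst hH hF hG
  refine ⟨?_, ?_, by ring, ?_⟩ <;>
  · simp only [map_add, map_sub, map_neg, Derivation.leibniz, Derivation.leibniz_pow, hX, hY, hZ,
      hC, map_ofNat, h2, smul_eq_mul, map_pow]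
    ring
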